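/- Let N ≥ 1 and let 0 ≤ m_1 < m_2 < … < m_N < d be natural numbers, and let V ⊆ ℂ[x] be the ℂ-linear span of the N+1 polynomials P_{m_1;d}, …, P_{m_N;d}, (x+1)^d. Then V has dimension N+1, and the set of root multiplicities at 0 of the nonzero elements of V is exactly {0, m_1+1, m_2+1, …, m_N+1}. -/

import Mathlib

open Polynomial

/-- The truncated binomial `P_{k;d}(x) = ∑_{i=0}^{k} (d choose i) x^i` as a complex
polynomial. -/
noncomputable def truncBinom (d k : ℕ) : Polynomial ℂ :=
  ∑ i ∈ Finset.range (k + 1), Polynomial.C (Nat.choose d i : ℂ) * Polynomial.X ^ i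

lemma truncBinom_coeff (d k j : ℕ) :
    (truncBinom d k).coeff j = if j ≤ k then (d.choose j : ℂ) else 0 := by
  simp only [truncBinom, finset_sum_coeff, coeff_C_mul, coeff_X_pow, mul_ite, mul_one,
    mul_zero]
  rw [Finset.sum_ite_eq (Finset.range (k + 1)) j]
  simp [Nat.lt_succ_iff]

/-- Coefficients of `(X+1)^d - truncBinom d k`. -/
lemma diff_coeff (d k j : ℕ) :
    ((X + 1) ^ d - truncBinom d k : Polynomial ℂ).coeff j
      = if j ≤ k then 0 else (d.choose j : ℂ) := by
  rw [coeff_sub, coeff_X_add_one_pow, truncBinom_coeff]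
  split <;> ring

lemma key_sum (n : ℕ) (f : Fin n → Polynomial ℂ) (hf0 : ∀ i, f i ≠ 0)
    (hinj : Function.Injective fun i => (f i).natTrailingDegree)
    (c : Fin n → ℂ) (i0 : Fin n) (hc : c i0 ≠ 0)
    (hmin : ∀ j, c j ≠ 0 → (f i0).natTrailingDegree ≤ (f j).natTrailingDegree) :
    (∑ i, c i • f i) ≠ 0 ∧
      (∑ i, c i • f i).natTrailingDegree = (f i0).natTrailingDegree := by
  set k := (f i0).natTrailingDegree with hk
  have hcoeffk : (∑ i, c i • f i).coeff k = c i0 * (f i0).coeff k := by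
    rw [finset_sum_coeff]
    refine Finset.sum_eq_single i0 (fun j _ hj => ?_) (by simp)
    rcases eq_or_ne (c j) 0 with h | h
    · simp [h]
    · have h1 : k ≤ (f j).natTrailingDegree := hmin j h
      have h2 : k ≠ (f j).natTrailingDegree := fun he => hj (hinj he.symm)
      rw [coeff_smul, coeff_eq_zero_of_lt_natTrailingDegree (lt_of_le_of_ne h1 h2),
        smul_zero]
  have hne : (∑ i, c i • f i).coeff k ≠ 0 := by
    rw [hcoeffk]
    exact mul_ne_zero hc (coeff_natTrailingDegree_ne_zero.2 (hf0 i0))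
  have hs0 : (∑ i, c i • f i) ≠ 0 := fun h => hne (by simp [h])
  refine ⟨hs0, le_antisymm (natTrailingDegree_le_of_ne_zero hne) ?_⟩
  refine le_natTrailingDegree hs0 fun j hj => ?_
  rw [finset_sum_coeff]
  refine Finset.sum_eq_zero fun i _ => ?_
  rcases eq_or_ne (c i) 0 with h | h
  · simp [h]
  · rw [coeff_smul, coeff_eq_zero_of_lt_natTrailingDegree (lt_of_lt_of_le hj (hmin i h)),
      smul_zero]

/-- Let `V` be the span of `P_{m_1;d}, …, P_{m_N;d}, (x+1)^d` where
`0 ≤ m_1 < … < m_N < d`.  Then `V` has dimension `N+1` and the set of root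
multiplicities at `0` of nonzero elements of `V` is exactly
`{0, m_1+1, …, m_N+1}`. -/
theorem span_truncBinoms_orders_at_zero (N d : ℕ) (hN : 1 ≤ N)
    (m : Fin N → ℕ) (hmono : StrictMono m) (hlt : ∀ i, m i < d)
    (V : Submodule ℂ (Polynomial ℂ))
    (hV : V = Submodule.span ℂ (Set.range
      (Fin.snoc (fun i : Fin N => truncBinom d (m i))
        ((Polynomial.X + 1) ^ d : Polynomial ℂ)))) :
    Module.finrank ℂ V = N + 1 ∧
    {k : ℕ | ∃ f ∈ V, f ≠ 0 ∧ Polynomial.rootMultiplicity 0 f = k}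
      = insert 0 (Set.range fun i : Fin N => m i + 1) := by
  set F : Fin (N + 1) → Polynomial ℂ :=
    Fin.snoc (fun i : Fin N => truncBinom d (m i)) ((X + 1) ^ d) with hF
  set G : Fin (N + 1) → Polynomial ℂ :=
    Fin.snoc (fun i : Fin N => (X + 1) ^ d - truncBinom d (m i)) ((X + 1) ^ d) with hG
  set ν : Fin (N + 1) → ℕ := Fin.snoc (fun i : Fin N => m i + 1) 0 with hν
  -- trailing degree facts
  have hpow0 : ((X + 1) ^ d : Polynomial ℂ).coeff 0 = 1 := by
    rw [coeff_X_add_one_pow]; simp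
  have hpowne : ((X + 1) ^ d : Polynomial ℂ) ≠ 0 := fun h => by simp [h] at hpow0
  have hpowntd : ((X + 1) ^ d : Polynomial ℂ).natTrailingDegree = 0 :=
    le_antisymm (natTrailingDegree_le_of_ne_zero (by rw [hpow0]; exact one_ne_zero))
      (Nat.zero_le _)
  have hdiffc : ∀ i : Fin N,
      ((X + 1) ^ d - truncBinom d (m i) : Polynomial ℂ).coeff (m i + 1)
        = (d.choose (m i + 1) : ℂ) := by
    intro i; rw [diff_coeff]; simp
  have hchoose : ∀ i : Fin N, (d.choose (m i + 1) : ℂ) ≠ 0 := by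
    intro i
    have : 0 < d.choose (m i + 1) := Nat.choose_pos (hlt i)
    exact_mod_cast Nat.cast_ne_zero.2 this.ne'
  have hdiffne : ∀ i : Fin N, ((X + 1) ^ d - truncBinom d (m i) : Polynomial ℂ) ≠ 0 := by
    intro i h
    exact hchoose i (by rw [← hdiffc i, h, coeff_zero])
  have hdiffntd : ∀ i : Fin N,
      ((X + 1) ^ d - truncBinom d (m i) : Polynomial ℂ).natTrailingDegree = m i + 1 := by
    intro i
    refine le_antisymm
      (natTrailingDegree_le_of_ne_zero (by rw [hdiffc i]; exact hchoose i)) ?_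
    refine le_natTrailingDegree (hdiffne i) fun j hj => ?_
    rw [diff_coeff]; simp [Nat.lt_succ_iff.1 hj]
  have hGntd : ∀ j, (G j).natTrailingDegree = ν j := by
    intro j
    refine Fin.lastCases ?_ (fun i => ?_) j
    · simp [hG, hν, hpowntd]
    · simp [hG, hν, hdiffntd i]
  have hG0 : ∀ j, G j ≠ 0 := by
    intro j
    refine Fin.lastCases ?_ (fun i => ?_) j <;> simp [hG, hpowne, hdiffne]
  have hνinj : Function.Injective ν := by
    intro a b hab
    induction a using Fin.lastCases with
    | last =>
      induction b using Fin.lastCases with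
      | last => rfl
      | cast j => simp [hν, Fin.snoc_last, Fin.snoc_castSucc] at hab
    | cast i =>
      induction b using Fin.lastCases with
      | last => simp [hν, Fin.snoc_last, Fin.snoc_castSucc] at hab
      | cast j =>
        simp only [hν, Fin.snoc_castSucc, Nat.add_right_cancel_iff] at hab
        exact congrArg Fin.castSucc (hmono.injective hab)
  have hGinj : Function.Injective fun j => (G j).natTrailingDegree := by
    intro a b hab
    simp only [hGntd] at hab
    exact hνinj hab
  -- span equality
  have hspan : Submodule.span ℂ (Set.range F) = Submodule.span ℂ (Set.range G) := by
    apply le_antisymm <;> rw [Submodule.span_le] <;>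
      rintro _ ⟨j, rfl⟩ <;> refine Fin.lastCases ?_ (fun i => ?_) j
    · exact Submodule.subset_span ⟨Fin.last N, by simp [hF, hG]⟩
    · have : F (Fin.castSucc i) = G (Fin.last N) - G (Fin.castSucc i) := by
        simp [hF, hG]
      rw [this]
      exact sub_mem (Submodule.subset_span ⟨Fin.last N, rfl⟩)
        (Submodule.subset_span ⟨Fin.castSucc i, rfl⟩)
    · exact Submodule.subset_span ⟨Fin.last N, by simp [hF, hG]⟩
    · have : G (Fin.castSucc i) = F (Fin.last N) - F (Fin.castSucc i) := by
        simp [hF, hG]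
      rw [this]
      exact sub_mem (Submodule.subset_span ⟨Fin.last N, rfl⟩)
        (Submodule.subset_span ⟨Fin.castSucc i, rfl⟩)
  have hVG : V = Submodule.span ℂ (Set.range G) := hV.trans hspan
  -- linear independence of G
  have hli : LinearIndependent ℂ G := by
    rw [Fintype.linearIndependent_iff]
    intro c hc
    by_contra hcc
    push_neg at hcc
    obtain ⟨i, hi⟩ := hcc
    set s := Finset.univ.filter (fun j => c j ≠ 0) with hs
    have hsne : s.Nonempty := ⟨i, by simp [hs, hi]⟩
    obtain ⟨i0, hi0s, hi0min⟩ := s.exists_min_image (fun j => (G j).natTrailingDegree) hsne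
    have hci0 : c i0 ≠ 0 := (Finset.mem_filter.1 hi0s).2
    have := (key_sum (N + 1) G hG0 hGinj c i0 hci0
      (fun j hj => hi0min j (by simp [hs, hj]))).1
    exact this hc
  constructor
  · rw [hVG, finrank_span_eq_card hli, Fintype.card_fin]
  · ext k
    simp only [Set.mem_setOf_eq, Set.mem_insert_iff, Set.mem_range]
    constructor
    · rintro ⟨f, hfV, hf0, rfl⟩
      rw [hVG] at hfV
      obtain ⟨c, hc⟩ := (Finsupp.mem_span_range_iff_exists_finsupp.1 hfV)
      rw [Finsupp.sum_fintype _ _ (by simp)] at hc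
      have hcex : ∃ i, c i ≠ 0 := by
        by_contra h
        push_neg at h
        apply hf0
        rw [← hc]
        exact Finset.sum_eq_zero fun i _ => by rw [h i, zero_smul]
      obtain ⟨i, hi⟩ := hcex
      set s := Finset.univ.filter (fun j => (c : Fin (N+1) → ℂ) j ≠ 0) with hs
      have hsne : s.Nonempty := ⟨i, by simp [hs, hi]⟩
      obtain ⟨i0, hi0s, hi0min⟩ := s.exists_min_image (fun j => (G j).natTrailingDegree) hsne
      have hci0 : c i0 ≠ 0 := (Finset.mem_filter.1 hi0s).2
      have hkey := (key_sum (N + 1) G hG0 hGinj c i0 hci0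
        (fun j hj => hi0min j (by simp [hs, hj]))).2
      rw [hc] at hkey
      rw [rootMultiplicity_eq_natTrailingDegree', hkey, hGntd]
      refine Fin.lastCases ?_ (fun j => ?_) i0
      · left; simp [hν]
      · right; exact ⟨j, by simp [hν]⟩
    · rintro (rfl | ⟨i, rfl⟩)
      · refine ⟨(X + 1) ^ d, ?_, hpowne, ?_⟩
        · rw [hVG]
          exact Submodule.subset_span ⟨Fin.last N, by simp [hG]⟩
        · rw [rootMultiplicity_eq_natTrailingDegree', hpowntd]
      · refine ⟨(X + 1) ^ d - truncBinom d (m i), ?_, hdiffne i, ?_⟩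
        · rw [hVG]
          exact Submodule.subset_span ⟨Fin.castSucc i, by simp [hG]⟩
        · rw [rootMultiplicity_eq_natTrailingDegree', hdiffntd i]
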